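/- For every integer k ≥ 1, the subspace I_k is a Lie ideal of 𝔗, i.e. [x, y] ∈ I_k for all x ∈ 𝔗 and y ∈ I_k; moreover I_k ⊆ I_{k−1} for every k ≥ 2. -/
import Mathlib


/-- `T_k(u,r,m₁,…,m_k) = ∑_{S ⊆ {1,…,k}} (−1)^{|S|} T(u, r + ∑_{i∈S} mᵢ)`. -/
noncomputable def Tk {d : ℕ} {L : Type*} [AddCommGroup L] [Module ℂ L]
    (T : (Fin d → ℂ) → (Fin d → ℤ) → L) (k : ℕ)
    (u : Fin d → ℂ) (r : Fin d → ℤ) (m : Fin k → Fin d → ℤ) : L :=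
  ∑ S : Finset (Fin k), ((-1 : ℂ) ^ S.card) • T u (r + ∑ i ∈ S, m i)

/-- `I_k`, the `ℂ`-linear span of all `T_k(u,r,m₁,…,m_k)` with `u ∈ ℂ^d` and
`r, m₁,…,m_k ∈ ℤ^d`. -/
noncomputable def Ik {d : ℕ} {L : Type*} [AddCommGroup L] [Module ℂ L]
    (T : (Fin d → ℂ) → (Fin d → ℤ) → L) (k : ℕ) : Submodule ℂ L :=
  Submodule.span ℂ
    {x : L | ∃ (u : Fin d → ℂ) (r : Fin d → ℤ) (m : Fin k → Fin d → ℤ),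
      x = Tk T k u r m}

section Aux

open Finset

variable {M : Type*} [AddCommMonoid M]

lemma sum_powerset_map' {α β : Type*} [DecidableEq α] [DecidableEq β]
    (f : α ↪ β) (s : Finset α) (g : Finset β → M) :
    ∑ t ∈ (s.map f).powerset, g t = ∑ t ∈ s.powerset, g (t.map f) := by
  induction s using Finset.cons_induction generalizing g with
  | empty => simp
  | cons a s ha ih =>
      rw [Finset.cons_eq_insert, Finset.map_insert,
        Finset.sum_powerset_insert (by simp [Finset.mem_map', ha]),
        Finset.sum_powerset_insert ha, ih, ih]
      refine congrArg _ (Finset.sum_congr rfl fun t _ => ?_)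
      rw [Finset.map_insert]

lemma sum_finset_split {k : ℕ} (j : Fin k) (g : Finset (Fin k) → M) :
    ∑ S : Finset (Fin k), g S
      = ∑ S ∈ ((Finset.univ : Finset (Fin k)).erase j).powerset, g S
        + ∑ S ∈ ((Finset.univ : Finset (Fin k)).erase j).powerset, g (insert j S) := by
  rw [← Finset.powerset_univ]
  conv_lhs => rw [← Finset.insert_erase (Finset.mem_univ j)]
  exact Finset.sum_powerset_insert (Finset.notMem_erase j _) g

lemma sum_neg_one_pow_fin {k : ℕ} (hk : 1 ≤ k) :
    ∑ S : Finset (Fin k), (-1 : ℂ) ^ S.card = 0 := by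
  have h : (Finset.univ : Finset (Fin k)) ≠ ∅ := by
    have : Nonempty (Fin k) := ⟨⟨0, hk⟩⟩
    exact Finset.univ_nonempty.ne_empty
  have h2 : ((∑ S ∈ (Finset.univ : Finset (Fin k)).powerset, (-1 : ℤ) ^ S.card : ℤ) : ℂ)
      = ∑ S : Finset (Fin k), (-1 : ℂ) ^ S.card := by
    rw [Finset.powerset_univ]; push_cast; rfl
  rw [← h2, Finset.sum_powerset_neg_one_pow_card, if_neg h]; simp

variable {G N : Type*} [AddCommGroup G] [AddCommGroup N] [Module ℂ N]

lemma aux2 {k : ℕ} (f : G → N) (r s : G) (m : Fin k → G) (j : Fin k) :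
    ∑ S : Finset (Fin k),
        (if j ∈ S then ((-1 : ℂ) ^ S.card) •
          (f (r + ∑ i ∈ S, m i + s) - f (r + ∑ i ∈ S, m i)) else 0)
      = ∑ S : Finset (Fin k),
          ((-1 : ℂ) ^ S.card) • f (r + m j + ∑ i ∈ S, Function.update m j s i) := by
  rw [sum_finset_split j, sum_finset_split j
    (g := fun S => ((-1 : ℂ) ^ S.card) • f (r + m j + ∑ i ∈ S, Function.update m j s i))]
  have hzero : ∑ S ∈ ((Finset.univ : Finset (Fin k)).erase j).powerset,
      (if j ∈ S then ((-1 : ℂ) ^ S.card) •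
        (f (r + ∑ i ∈ S, m i + s) - f (r + ∑ i ∈ S, m i)) else 0) = 0 := by
    refine Finset.sum_eq_zero fun S hS => ?_
    have hjS : j ∉ S := fun h =>
      (Finset.mem_erase.1 (Finset.mem_powerset.1 hS h)).1 rfl
    rw [if_neg hjS]
  rw [hzero, zero_add, ← Finset.sum_add_distrib]
  refine Finset.sum_congr rfl fun S hS => ?_
  have hjS : j ∉ S := fun h =>
    (Finset.mem_erase.1 (Finset.mem_powerset.1 hS h)).1 rfl
  have h1 : ∑ i ∈ S, Function.update m j s i = ∑ i ∈ S, m i :=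
    Finset.sum_congr rfl fun i hi =>
      Function.update_of_ne (by rintro rfl; exact hjS hi) _ _
  rw [if_pos (Finset.mem_insert_self j S), Finset.card_insert_of_notMem hjS,
    Finset.sum_insert hjS, Finset.sum_insert hjS, Function.update_self, h1]
  have harg : r + (m j + ∑ i ∈ S, m i) + s = r + m j + (s + ∑ i ∈ S, m i) := by abel
  have harg2 : r + (m j + ∑ i ∈ S, m i) = r + m j + ∑ i ∈ S, m i := by abel
  rw [harg, harg2, pow_succ]
  module

lemma dot_split {d k : ℕ} (v : Fin d → ℂ) (r : Fin d → ℤ) (S : Finset (Fin k))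
    (m : Fin k → Fin d → ℤ) :
    (∑ i, v i * (((r + ∑ j ∈ S, m j) i : ℤ) : ℂ))
      = (∑ i, v i * (r i : ℂ)) + ∑ j ∈ S, ∑ i, v i * ((m j i : ℤ) : ℂ) := by
  simp only [Pi.add_apply, Finset.sum_apply, Int.cast_add, Int.cast_sum, mul_add,
    Finset.mul_sum]
  rw [Finset.sum_add_distrib, Finset.sum_comm]

end Aux

section BracketTk

variable {d k : ℕ} {L : Type*} [LieRing L] [LieAlgebra ℂ L]

lemma bracket_Tk (T : (Fin d → ℂ) → (Fin d → ℤ) → L)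
    (hlin : ∀ r : Fin d → ℤ, IsLinearMap ℂ (fun u => T u r))
    (hbr : ∀ (u v : Fin d → ℂ) (r s : Fin d → ℤ),
      ⁅T v s, T u r⁆
        = (∑ i, u i * (s i : ℂ)) • T v s - (∑ i, v i * (r i : ℂ)) • T u r
          + T ((∑ i, v i * (r i : ℂ)) • u - (∑ i, u i * (s i : ℂ)) • v) (r + s))
    (hk : 1 ≤ k) (v u : Fin d → ℂ) (s r : Fin d → ℤ) (m : Fin k → Fin d → ℤ) :
    ⁅T v s, Tk T k u r m⁆
      = (∑ i, v i * (r i : ℂ)) • Tk T k u (r + s) m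
        - (∑ i, v i * (r i : ℂ)) • Tk T k u r m
        - (∑ i, u i * (s i : ℂ)) • Tk T k v (r + s) m
        + ∑ j, (∑ i, v i * ((m j i : ℤ) : ℂ)) •
            Tk T k u (r + m j) (Function.update m j s) := by
  set a : ℂ := ∑ i, u i * (s i : ℂ) with ha
  set b : ℂ := ∑ i, v i * (r i : ℂ) with hb
  set c : Fin k → ℂ := fun j => ∑ i, v i * ((m j i : ℤ) : ℂ) with hc
  have hsum : ∀ F : Finset (Fin k) → L,
      ⁅T v s, ∑ S : Finset (Fin k), F S⁆ = ∑ S : Finset (Fin k), ⁅T v s, F S⁆ := by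
    intro F
    rw [← LieAlgebra.ad_apply (R := ℂ), map_sum]
    simp only [LieAlgebra.ad_apply]
  have key : ∀ S : Finset (Fin k),
      ⁅T v s, T u (r + ∑ i ∈ S, m i)⁆
        = a • T v s - (b + ∑ j ∈ S, c j) • T u (r + ∑ i ∈ S, m i)
          + ((b + ∑ j ∈ S, c j) • T u (r + ∑ i ∈ S, m i + s)
            - a • T v (r + ∑ i ∈ S, m i + s)) := by
    intro S
    rw [hbr]
    have h1 : (∑ i, v i * (((r + ∑ j ∈ S, m j) i : ℤ) : ℂ)) = b + ∑ j ∈ S, c j :=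
      dot_split v r S m
    have h2 : T ((b + ∑ j ∈ S, c j) • u - a • v) (r + ∑ i ∈ S, m i + s)
        = (b + ∑ j ∈ S, c j) • T u (r + ∑ i ∈ S, m i + s)
          - a • T v (r + ∑ i ∈ S, m i + s) := by
      let lm := IsLinearMap.mk' _ (hlin (r + ∑ i ∈ S, m i + s))
      calc T ((b + ∑ j ∈ S, c j) • u - a • v) (r + ∑ i ∈ S, m i + s)
          = lm ((b + ∑ j ∈ S, c j) • u - a • v) := rfl
        _ = (b + ∑ j ∈ S, c j) • lm u - a • lm v := by rw [map_sub, map_smul, map_smul]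
        _ = _ := rfl
    rw [h1, h2]
  have step : ∀ S : Finset (Fin k),
      ((-1 : ℂ) ^ S.card) • ⁅T v s, T u (r + ∑ i ∈ S, m i)⁆
        = ((-1 : ℂ) ^ S.card) • (a • T v s)
          + b • (((-1 : ℂ) ^ S.card) • T u ((r + s) + ∑ i ∈ S, m i))
          - b • (((-1 : ℂ) ^ S.card) • T u (r + ∑ i ∈ S, m i))
          - a • (((-1 : ℂ) ^ S.card) • T v ((r + s) + ∑ i ∈ S, m i))
          + ∑ j, (if j ∈ S then c j • (((-1 : ℂ) ^ S.card) •
              (T u (r + ∑ i ∈ S, m i + s) - T u (r + ∑ i ∈ S, m i))) else 0) := by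
    intro S
    rw [key S]
    have harg : (r + s) + ∑ i ∈ S, m i = r + ∑ i ∈ S, m i + s := by abel
    rw [harg]
    have hw : ∑ j, (if j ∈ S then c j • (((-1 : ℂ) ^ S.card) •
        (T u (r + ∑ i ∈ S, m i + s) - T u (r + ∑ i ∈ S, m i))) else 0)
        = (∑ j ∈ S, c j) • (((-1 : ℂ) ^ S.card) •
            (T u (r + ∑ i ∈ S, m i + s) - T u (r + ∑ i ∈ S, m i))) := by
      rw [Finset.sum_ite_mem, Finset.univ_inter, ← Finset.sum_smul]
    rw [hw]
    module
  show ⁅T v s, ∑ S : Finset (Fin k), ((-1 : ℂ) ^ S.card) • T u (r + ∑ i ∈ S, m i)⁆ = _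
  rw [hsum]
  simp only [lie_smul]
  rw [Finset.sum_congr rfl fun S _ => step S]
  rw [Finset.sum_add_distrib, Finset.sum_sub_distrib, Finset.sum_sub_distrib,
    Finset.sum_add_distrib]
  rw [← Finset.sum_smul, sum_neg_one_pow_fin hk, zero_smul, zero_add]
  rw [← Finset.smul_sum, ← Finset.smul_sum, ← Finset.smul_sum]
  rw [Finset.sum_comm]
  have hj : ∀ j : Fin k,
      ∑ S : Finset (Fin k), (if j ∈ S then c j • (((-1 : ℂ) ^ S.card) •
          (T u (r + ∑ i ∈ S, m i + s) - T u (r + ∑ i ∈ S, m i))) else 0)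
        = c j • Tk T k u (r + m j) (Function.update m j s) := by
    intro j
    have h1 : ∑ S : Finset (Fin k), (if j ∈ S then c j • (((-1 : ℂ) ^ S.card) •
        (T u (r + ∑ i ∈ S, m i + s) - T u (r + ∑ i ∈ S, m i))) else 0)
        = c j • ∑ S : Finset (Fin k), (if j ∈ S then (((-1 : ℂ) ^ S.card) •
            (T u (r + ∑ i ∈ S, m i + s) - T u (r + ∑ i ∈ S, m i))) else 0) := by
      rw [Finset.smul_sum]
      exact Finset.sum_congr rfl fun S _ => by split <;> simp
    rw [h1, aux2 (fun w => T u w) r s m j]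
    rfl
  rw [Finset.sum_congr rfl fun j _ => hj j]
  show _ = b • Tk T k u (r + s) m - b • Tk T k u r m - a • Tk T k v (r + s) m
    + ∑ j, c j • Tk T k u (r + m j) (Function.update m j s)
  unfold Tk
  abel

end BracketTk

section TkSucc

variable {d n : ℕ} {L : Type*} [AddCommGroup L] [Module ℂ L]

lemma Tk_succ (T : (Fin d → ℂ) → (Fin d → ℤ) → L) (u : Fin d → ℂ) (r : Fin d → ℤ)
    (m : Fin (n + 1) → Fin d → ℤ) :
    Tk T (n + 1) u r m
      = Tk T n u r (fun i => m i.castSucc)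
        - Tk T n u (r + m (Fin.last n)) (fun i => m i.castSucc) := by
  unfold Tk
  have hlast' : ∀ t : Finset (Fin n), Fin.last n ∉ t.map Fin.castSuccEmb := by
    intro t h
    obtain ⟨i, _, hi⟩ := Finset.mem_map.1 h
    exact (Fin.castSucc_lt_last i).ne hi
  have hlast : Fin.last n ∉ (Finset.univ : Finset (Fin n)).map Fin.castSuccEmb :=
    hlast' _
  rw [← Finset.powerset_univ, Fin.univ_castSuccEmb, Finset.cons_eq_insert,
    Finset.sum_powerset_insert hlast, sum_powerset_map', sum_powerset_map',
    Finset.powerset_univ]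
  change _ = ∑ S : Finset (Fin n), ((-1 : ℂ) ^ S.card) • T u (r + ∑ i ∈ S, m i.castSucc)
    - ∑ S : Finset (Fin n), ((-1 : ℂ) ^ S.card) •
        T u ((r + m (Fin.last n)) + ∑ i ∈ S, m i.castSucc)
  have h1 : ∀ t : Finset (Fin n),
      ((-1 : ℂ) ^ (t.map Fin.castSuccEmb).card) •
        T u (r + ∑ i ∈ t.map Fin.castSuccEmb, m i)
      = ((-1 : ℂ) ^ t.card) • T u (r + ∑ i ∈ t, m i.castSucc) := by
    intro t
    rw [Finset.card_map, Finset.sum_map]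
    rfl
  have h2 : ∀ t : Finset (Fin n),
      ((-1 : ℂ) ^ (insert (Fin.last n) (t.map Fin.castSuccEmb)).card) •
        T u (r + ∑ i ∈ insert (Fin.last n) (t.map Fin.castSuccEmb), m i)
      = -(((-1 : ℂ) ^ t.card) • T u ((r + m (Fin.last n)) + ∑ i ∈ t, m i.castSucc)) := by
    intro t
    rw [Finset.card_insert_of_notMem (hlast' t), Finset.sum_insert (hlast' t),
      Finset.card_map, Finset.sum_map]
    have harg : r + (m (Fin.last n) + ∑ i ∈ t, m i.castSucc)
        = (r + m (Fin.last n)) + ∑ i ∈ t, m i.castSucc := by abel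
    rw [show (∑ i ∈ t, m (Fin.castSuccEmb i)) = ∑ i ∈ t, m i.castSucc from rfl,
      harg, pow_succ]
    module
  rw [Finset.sum_congr rfl fun t _ => h1 t, Finset.sum_congr rfl fun t _ => h2 t]
  rw [Finset.sum_neg_distrib, ← sub_eq_add_neg]

end TkSucc

/-- For every `k ≥ 1`, `I_k` is a Lie ideal of `𝔗`, and `I_k ⊆ I_{k−1}` for `k ≥ 2`. -/
theorem Ik_is_ideal_and_decreasing (d : ℕ) (hd : 2 ≤ d)
    (L : Type*) [LieRing L] [LieAlgebra ℂ L]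
    (T : (Fin d → ℂ) → (Fin d → ℤ) → L)
    (hlin : ∀ r : Fin d → ℤ, IsLinearMap ℂ (fun u => T u r))
    (hzero : ∀ u : Fin d → ℂ, T u 0 = 0)
    (hind : LinearIndependent ℂ
      (fun p : Fin d × {r : Fin d → ℤ // r ≠ 0} => T (Pi.single p.1 1) p.2.1))
    (hspan : Submodule.span ℂ
      (Set.range fun p : Fin d × {r : Fin d → ℤ // r ≠ 0} =>
        T (Pi.single p.1 1) p.2.1) = ⊤)
    (hbr : ∀ (u v : Fin d → ℂ) (r s : Fin d → ℤ),
      ⁅T v s, T u r⁆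
        = (∑ i, u i * (s i : ℂ)) • T v s - (∑ i, v i * (r i : ℂ)) • T u r
          + T ((∑ i, v i * (r i : ℂ)) • u - (∑ i, u i * (s i : ℂ)) • v) (r + s))
    (k : ℕ) (hk : 1 ≤ k) :
    (∀ (x : L), ∀ y ∈ Ik T k, ⁅x, y⁆ ∈ Ik T k) ∧
    (2 ≤ k → Ik T k ≤ Ik T (k - 1)) := by
  constructor
  · have hgen : ∀ (v : Fin d → ℂ) (s : Fin d → ℤ), ∀ y ∈ Ik T k, ⁅T v s, y⁆ ∈ Ik T k := by
      intro v s y hy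
      induction hy using Submodule.span_induction with
      | mem x hx =>
          obtain ⟨u, r, m, rfl⟩ := hx
          rw [bracket_Tk T hlin hbr hk]
          refine add_mem (sub_mem (sub_mem
            (Submodule.smul_mem _ _ (Submodule.subset_span ⟨u, r + s, m, rfl⟩))
            (Submodule.smul_mem _ _ (Submodule.subset_span ⟨u, r, m, rfl⟩)))
            (Submodule.smul_mem _ _ (Submodule.subset_span ⟨v, r + s, m, rfl⟩)))
            (Submodule.sum_mem _ fun j _ =>
              Submodule.smul_mem _ _ (Submodule.subset_span
                ⟨u, r + m j, Function.update m j s, rfl⟩))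
      | zero => simp
      | add x y hx hy ihx ihy => rw [lie_add]; exact add_mem ihx ihy
      | smul a x hx ihx => rw [lie_smul]; exact Submodule.smul_mem _ _ ihx
    intro x y hy
    have hx : x ∈ Submodule.span ℂ
        (Set.range fun p : Fin d × {r : Fin d → ℤ // r ≠ 0} =>
          T (Pi.single p.1 1) p.2.1) := by rw [hspan]; trivial
    induction hx using Submodule.span_induction with
    | mem z hz =>
        obtain ⟨p, rfl⟩ := hz
        exact hgen _ _ y hy
    | zero => simp
    | add x₁ x₂ h₁ h₂ ih₁ ih₂ => rw [add_lie]; exact add_mem ih₁ ih₂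
    | smul a x₁ h₁ ih₁ => rw [smul_lie]; exact Submodule.smul_mem _ _ ih₁
  · intro hk2
    obtain ⟨n, rfl⟩ : ∃ n, k = n + 1 := ⟨k - 1, by omega⟩
    simp only [Nat.add_sub_cancel]
    refine Submodule.span_le.2 ?_
    rintro x ⟨u, r, m, rfl⟩
    rw [Tk_succ]
    exact sub_mem (Submodule.subset_span ⟨u, r, _, rfl⟩)
      (Submodule.subset_span ⟨u, r + m (Fin.last n), _, rfl⟩)
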